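/- For f ∈ {0,1,...,h−1}, the f-split rooted at w_1 together with an extra vertex ρ adjacent to w_1 has exactly s_h(f) = h + f² + f + 1 subtrees containing ρ. -/

import Mathlib

open SimpleGraph Finset

/-- Eccentricity of a vertex: max distance to any vertex. -/
noncomputable def ecc {V : Type*} [Fintype V] (G : SimpleGraph V) (v : V) : ℕ :=
  Finset.univ.sup (fun u => G.dist v u)

/-- The center: vertices of minimum eccentricity. -/
noncomputable def center {V : Type*} [Fintype V] (G : SimpleGraph V) : Set V :=
  {v | ∀ u, ecc G v ≤ ecc G u}

/-- Total distance of a vertex. -/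
noncomputable def totalDist {V : Type*} [Fintype V] (G : SimpleGraph V) (v : V) : ℕ :=
  ∑ u, G.dist v u

/-- The centroid: vertices of minimum total distance. -/
noncomputable def centroid {V : Type*} [Fintype V] (G : SimpleGraph V) : Set V :=
  {v | ∀ u, totalDist G v ≤ totalDist G u}

/-- Number of subtrees (connected induced subgraphs on nonempty vertex sets) containing `v`. -/
noncomputable def subtreeCount {V : Type*} [Fintype V] (G : SimpleGraph V) (v : V) : ℕ :=
  Nat.card {A : Finset V // v ∈ A ∧ (G.induce (A : Set V)).Connected}

/-- The subtree core: vertices maximizing the number of containing subtrees. -/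
noncomputable def core {V : Type*} [Fintype V] (G : SimpleGraph V) : Set V :=
  {v | ∀ u, subtreeCount G u ≤ subtreeCount G v}

/-- Distance between two sets of vertices. -/
noncomputable def setDist {V : Type*} (G : SimpleGraph V) (S S' : Set V) : ℕ :=
  sInf {n | ∃ u ∈ S, ∃ v ∈ S', G.dist u v = n}

/-- The `f`-split together with an extra root `ρ`: vertex `0` is `ρ`,
vertices `1, …, h` form the path `w_1, …, w_h`, vertices `h+1, …, h+f` form the
path `u_1, …, u_f`, and `u_1` is joined to `w_{h-f}`. -/
def splitWithRoot (h f : ℕ) : SimpleGraph (Fin (h + f + 1)) :=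
  SimpleGraph.fromRel (fun a b =>
    (a.val + 1 = b.val ∧ b.val ≤ h) ∨ (a.val + 1 = b.val ∧ h + 2 ≤ b.val) ∨
    (a.val = h - f ∧ b.val = h + 1))

namespace SplitAux
variable {h f : ℕ}

def pv (h f v : ℕ) : ℕ := if v = h + 1 then h - f else v - 1

lemma pv_lt {v : ℕ} (hv : v < h + f + 1) : pv h f v < h + f + 1 := by
  unfold pv; split <;> omega

def desc (h f v x : ℕ) : Prop := v ≤ x ∧ (h - f < v → v ≤ h → x ≤ h)

lemma adj_iff (a b : Fin (h+f+1)) :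
    (splitWithRoot h f).Adj a b ↔ a.val ≠ b.val ∧
      (((a.val + 1 = b.val ∧ b.val ≤ h) ∨ (a.val + 1 = b.val ∧ h + 2 ≤ b.val) ∨
        (a.val = h - f ∧ b.val = h + 1)) ∨
       ((b.val + 1 = a.val ∧ a.val ≤ h) ∨ (b.val + 1 = a.val ∧ h + 2 ≤ a.val) ∨
        (b.val = h - f ∧ a.val = h + 1))) := by
  simp [splitWithRoot, SimpleGraph.fromRel_adj, Fin.ext_iff, ne_eq]

lemma cross (hf : f < h) {x y : Fin (h+f+1)} {v : ℕ}
    (hv : 1 ≤ v) (hadj : (splitWithRoot h f).Adj x y)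
    (hx : desc h f v x.val) (hy : ¬ desc h f v y.val) : y.val = pv h f v := by
  rw [adj_iff] at hadj
  have hxlt := x.isLt; have hylt := y.isLt
  unfold desc at hx hy
  unfold pv
  split <;> omega

lemma walk_parent (hf : f < h) {v : ℕ} (hv : 1 ≤ v)
    {x y : Fin (h+f+1)} (W : (splitWithRoot h f).Walk x y) :
    desc h f v x.val → ¬ desc h f v y.val →
      ∃ z ∈ W.support, z.val = pv h f v := by
  induction W with
  | nil => intro hx hy; exact absurd hx hy
  | @cons a b c hadj W ih =>
    intro hx hy
    by_cases hb : desc h f v b.val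
    · obtain ⟨z, hz, hzv⟩ := ih hb hy
      exact ⟨z, by simp [Walk.support_cons, hz], hzv⟩
    · exact ⟨b, by simp [Walk.support_cons], cross hf hv hadj hx hb⟩

def indHom (A : Finset (Fin (h+f+1))) :
    (splitWithRoot h f).induce (A : Set (Fin (h+f+1))) →g splitWithRoot h f :=
  ⟨Subtype.val, fun hadj => hadj⟩

lemma mem_of_val {m : ℕ} {A : Finset (Fin m)} {z x : Fin m} (hz : z ∈ A)
    (hv : z.val = x.val) : x ∈ A := by
  have : z = x := Fin.ext hv
  rwa [this] at hz

def Closed (h f : ℕ) (A : Finset (Fin (h+f+1))) : Prop :=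
  (0 : Fin (h+f+1)) ∈ A ∧
    ∀ v ∈ A, 1 ≤ Fin.val v → (⟨pv h f (Fin.val v), pv_lt (Fin.isLt v)⟩ : Fin (h+f+1)) ∈ A

lemma closed_of (hf : f < h) {A : Finset (Fin (h+f+1))}
    (h0 : (0 : Fin (h+f+1)) ∈ A)
    (hc : ((splitWithRoot h f).induce (A : Set (Fin (h+f+1)))).Connected) :
    Closed h f A := by
  refine ⟨h0, fun v hv hv1 => ?_⟩
  obtain ⟨W⟩ := hc.preconnected ⟨v, hv⟩ ⟨0, h0⟩
  have hx : desc h f v.val v.val := ⟨le_rfl, fun _ h2 => h2⟩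
  have hy : ¬ desc h f v.val ((0 : Fin (h+f+1)).val) := by
    intro hd
    have : v.val ≤ 0 := hd.1
    omega
  obtain ⟨z, hz, hzv⟩ := walk_parent hf hv1 (W.map (indHom A)) hx hy
  rw [Walk.support_map] at hz
  obtain ⟨t, htW, htz⟩ := List.mem_map.mp hz
  have htA : (t : Fin (h+f+1)) ∈ A := t.property
  refine mem_of_val htA ?_
  have : ((indHom A) t : Fin (h+f+1)) = (t : Fin (h+f+1)) := rfl
  rw [this] at htz
  simp only [htz, hzv]


lemma adj_parent (hf : f < h) (v : Fin (h+f+1)) (hv : 1 ≤ v.val) :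
    (splitWithRoot h f).Adj ⟨pv h f v.val, pv_lt v.isLt⟩ v := by
  rw [adj_iff]
  have := v.isLt
  simp only []
  unfold pv
  split <;> omega

lemma reach_zero (hf : f < h) {A : Finset (Fin (h+f+1))} (hcl : Closed h f A) :
    ∀ m : ℕ, ∀ v : Fin (h+f+1), ∀ hvA : v ∈ A, v.val ≤ m →
      ((splitWithRoot h f).induce (A : Set (Fin (h+f+1)))).Reachable ⟨0, hcl.1⟩ ⟨v, hvA⟩ := by
  intro m
  induction m with
  | zero =>
    intro v hvA hv0
    have hv : v = 0 := Fin.ext (by show v.val = 0; omega)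
    subst hv
    exact Reachable.refl _
  | succ m ih =>
    intro v hvA hvm
    by_cases hv0 : v.val = 0
    · have hv : v = 0 := Fin.ext (by show v.val = 0; omega)
      subst hv
      exact Reachable.refl _
    · have hpA := hcl.2 v hvA (by omega)
      have hplt : pv h f v.val < v.val := by
        have := v.isLt; unfold pv; split <;> omega
      have hr := ih _ hpA (by simpa using by omega)
      have hadj : ((splitWithRoot h f).induce (A : Set (Fin (h+f+1)))).Adj
          ⟨⟨pv h f v.val, pv_lt v.isLt⟩, hpA⟩ ⟨v, hvA⟩ := adj_parent hf v (by omega)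
      exact hr.trans hadj.reachable

lemma connected_of (hf : f < h) {A : Finset (Fin (h+f+1))} (hcl : Closed h f A) :
    ((splitWithRoot h f).induce (A : Set (Fin (h+f+1)))).Connected := by
  rw [connected_iff]
  refine ⟨fun a b => ?_, ⟨⟨0, hcl.1⟩⟩⟩
  obtain ⟨a, haA⟩ := a
  obtain ⟨b, hbA⟩ := b
  exact (reach_zero hf hcl a.val a haA le_rfl).symm.trans
    (reach_zero hf hcl b.val b hbA le_rfl)


def gset (h f : ℕ) (p : ℕ × ℕ) : Finset (Fin (h+f+1)) :=
  univ.filter (fun x => x.val ≤ p.1 ∨ (h + 1 ≤ x.val ∧ x.val ≤ h + p.2))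

def T (h f : ℕ) : Finset (ℕ × ℕ) :=
  (range (h+1)) ×ˢ {0} ∪ (Icc (h-f) h) ×ˢ (Icc 1 f)

lemma mem_T {p : ℕ × ℕ} :
    p ∈ T h f ↔ p.1 ≤ h ∧ p.2 ≤ f ∧ (1 ≤ p.2 → h - f ≤ p.1) := by
  obtain ⟨a, b⟩ := p
  simp only [T, mem_union, Finset.mem_product, mem_range, mem_singleton, mem_Icc]
  omega

lemma card_T (hf : f < h) : (T h f).card = h + f ^ 2 + f + 1 := by
  rw [T, card_union_of_disjoint, card_product, card_product, card_range,
    card_singleton, Nat.card_Icc, Nat.card_Icc]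
  · have e1 : h + 1 - (h - f) = f + 1 := by omega
    have e2 : f + 1 - 1 = f := by omega
    rw [e1, e2]
    ring
  · rw [Finset.disjoint_left]
    rintro ⟨a, b⟩ hab hab'
    simp [Finset.mem_product] at hab hab'
    omega

lemma closed_gset (hf : f < h) {p : ℕ × ℕ} (hp : p ∈ T h f) :
    Closed h f (gset h f p) := by
  obtain ⟨a, b⟩ := p
  rw [mem_T] at hp
  constructor
  · simp [gset]
  · intro v hv hv1
    simp only [gset, mem_filter, mem_univ, true_and] at hv ⊢
    have := v.isLt
    unfold pv
    split <;> omega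

lemma chain (hf : f < h) {A : Finset (Fin (h+f+1))} (hcl : Closed h f A)
    {y : Fin (h+f+1)} (hy : y ∈ A) {x : Fin (h+f+1)} (hxy : x.val ≤ y.val)
    (hcond : y.val ≤ h ∨ h + 1 ≤ x.val) : x ∈ A := by
  suffices H : ∀ k, ∀ x : Fin (h+f+1), x.val + k = y.val →
      (y.val ≤ h ∨ h + 1 ≤ x.val) → x ∈ A by
    exact H (y.val - x.val) x (by omega) hcond
  intro k
  induction k with
  | zero =>
    intro x hx _
    exact mem_of_val hy (by omega)
  | succ k ih =>
    intro x hx hc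
    have hlt : x.val + 1 < h + f + 1 := by have := y.isLt; omega
    have hmem : (⟨x.val + 1, hlt⟩ : Fin (h+f+1)) ∈ A := by
      refine ih ⟨x.val + 1, hlt⟩ (by simp; omega) (by simp; omega)
    have h2 := hcl.2 ⟨x.val + 1, hlt⟩ hmem (by simp)
    refine mem_of_val h2 ?_
    simp only []
    unfold pv
    split <;> omega

lemma closed_iff_gset (hf : f < h) (A : Finset (Fin (h+f+1))) :
    ((0 : Fin (h+f+1)) ∈ A ∧
      ((splitWithRoot h f).induce (A : Set (Fin (h+f+1)))).Connected) ↔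
    ∃ p ∈ T h f, A = gset h f p := by
  constructor
  · rintro ⟨h0, hc⟩
    have hcl := closed_of hf h0 hc
    set a := A.sup (fun x : Fin (h+f+1) => if x.val ≤ h then x.val else 0) with ha
    set b := A.sup (fun x : Fin (h+f+1) => x.val - h) with hb
    have hane : A.Nonempty := ⟨0, h0⟩
    have hah : a ≤ h := Finset.sup_le (fun x _ => by split <;> omega)
    have hbf : b ≤ f := Finset.sup_le (fun x _ => by have := x.isLt; omega)
    -- branch down: if some y with y.val = h + b, b ≥ 1 then elements h+1..h+b in A
    have hbranch : 1 ≤ b → ∀ x : Fin (h+f+1), h + 1 ≤ x.val → x.val ≤ h + b → x ∈ A := by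
      intro hb1 x hx1 hx2
      obtain ⟨y, hyA, hyv⟩ := Finset.exists_mem_eq_sup A hane
        (fun x : Fin (h+f+1) => x.val - h)
      have hyval : y.val = h + b := by omega
      exact chain hf hcl hyA (by omega) (Or.inr hx1)
    have hT : (a, b) ∈ T h f := by
      rw [mem_T]
      refine ⟨hah, hbf, fun hb1 => ?_⟩
      have hf1 : 1 ≤ f := le_trans hb1 hbf
      have hx1 : (⟨h + 1, by omega⟩ : Fin (h+f+1)) ∈ A :=
        hbranch hb1 _ (by simp) (by simp; omega)
      have h2 := hcl.2 _ hx1 (by simp)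
      have hhf : (⟨h - f, by omega⟩ : Fin (h+f+1)) ∈ A := by
        refine mem_of_val h2 ?_
        simp only []
        unfold pv
        split <;> omega
      have := Finset.le_sup (f := fun x : Fin (h+f+1) => if x.val ≤ h then x.val else 0) hhf
      simp only [] at this
      rw [if_pos (by omega : (h:ℕ) - f ≤ h)] at this
      omega
    refine ⟨(a, b), hT, ?_⟩
    ext x
    simp only [gset, mem_filter, mem_univ, true_and]
    constructor
    · intro hxA
      have l1 := Finset.le_sup (f := fun x : Fin (h+f+1) => if x.val ≤ h then x.val else 0) hxA
      have l2 := Finset.le_sup (f := fun x : Fin (h+f+1) => x.val - h) hxA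
      by_cases hxh : x.val ≤ h
      · rw [if_pos hxh] at l1; omega
      · right; omega
    · rintro (hx | ⟨hx1, hx2⟩)
      · by_cases ha0 : a = 0
        · exact chain hf hcl h0 (by simp only [Fin.val_zero]; omega) (Or.inl (by simp only [Fin.val_zero]; omega))
        · obtain ⟨y, hyA, hyv⟩ := Finset.exists_mem_eq_sup A hane
            (fun x : Fin (h+f+1) => if x.val ≤ h then x.val else 0)
          have hyval : y.val = a ∧ y.val ≤ h := by
            by_cases hyh : y.val ≤ h
            · rw [if_pos hyh] at hyv; omega
            · rw [if_neg hyh] at hyv; omega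
          exact chain hf hcl hyA (by omega) (Or.inl (by omega))
      · exact hbranch (by omega) x hx1 hx2
  · rintro ⟨p, hp, rfl⟩
    have hcl := closed_gset hf hp
    exact ⟨hcl.1, connected_of hf hcl⟩

lemma gset_injOn (hf : f < h) : Set.InjOn (gset h f) (T h f) := by
  rintro ⟨a, b⟩ ha ⟨a', b'⟩ hb heq
  rw [Finset.mem_coe, mem_T] at ha hb
  have hmem : ∀ x : Fin (h+f+1),
      (x.val ≤ a ∨ (h + 1 ≤ x.val ∧ x.val ≤ h + b)) ↔
      (x.val ≤ a' ∨ (h + 1 ≤ x.val ∧ x.val ≤ h + b')) := by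
    intro x
    have : x ∈ gset h f (a, b) ↔ x ∈ gset h f (a', b') := by rw [heq]
    simpa [gset] using this
  have e1 := hmem ⟨a, by omega⟩
  have e2 := hmem ⟨a', by omega⟩
  have e3 := hmem ⟨h + b, by omega⟩
  have e4 := hmem ⟨h + b', by omega⟩
  simp only [] at e1 e2 e3 e4
  have : a = a' ∧ b = b' := by omega
  exact Prod.ext this.1 this.2

end SplitAux

theorem splitWithRoot_subtreeCount (h f : ℕ) (h1 : 1 ≤ h) (hf : f < h) :
    subtreeCount (splitWithRoot h f) 0 = h + f ^ 2 + f + 1 := by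
  classical
  rw [subtreeCount, Nat.card_eq_fintype_card, Fintype.card_subtype]
  have : (univ.filter (fun A : Finset (Fin (h+f+1)) => (0 : Fin (h+f+1)) ∈ A ∧
      ((splitWithRoot h f).induce (A : Set (Fin (h+f+1)))).Connected))
      = (SplitAux.T h f).image (SplitAux.gset h f) := by
    ext A
    simp only [mem_filter, mem_univ, true_and, Finset.mem_image]
    rw [SplitAux.closed_iff_gset hf]
    constructor
    · rintro ⟨p, hp, rfl⟩; exact ⟨p, hp, rfl⟩
    · rintro ⟨p, hp, rfl⟩; exact ⟨p, hp, rfl⟩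
  rw [this, Finset.card_image_of_injOn (SplitAux.gset_injOn hf), SplitAux.card_T hf]
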